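/- arXiv:1208.5501 — 2 statements merged into one kernel-verified Lean document; each statement's English description precedes it below -/
import Mathlib

section
/- Let $(x_n)$, $(y_n)$, $(q_n)$, $(\omega_n)$ be sequences of positive reals such that $|\sqrt{x_n} - \sqrt{y_n}| = O(q_n)$ and $\omega_n \to \infty$. Then $x_n = y_n(1 + o(1)) + O(q_n^2 \omega_n)$, i.e., there exist a sequence $(\epsilon_n)$ with $\epsilon_n \to 0$ and a constant $C > 0$ such that for all sufficiently large $n$, $|x_n - y_n(1+\epsilon_n)| \le C q_n^2 \omega_n$. -/
open Filter

/-- Lemma A.1: if `|√xₙ - √yₙ| = O(qₙ)` and `ωₙ → ∞`, then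
`xₙ = yₙ(1 + o(1)) + O(qₙ² ωₙ)`. -/
theorem sequence_comparison
    (x y q ω : ℕ → ℝ)
    (hx : ∀ n, 0 < x n) (hy : ∀ n, 0 < y n) (hq : ∀ n, 0 < q n) (hω : ∀ n, 0 < ω n)
    (hO : ∃ C : ℝ, ∀ᶠ n in atTop, |Real.sqrt (x n) - Real.sqrt (y n)| ≤ C * q n)
    (hωinf : Tendsto ω atTop atTop) :
    ∃ ε : ℕ → ℝ, Tendsto ε atTop (nhds 0) ∧
      ∃ C : ℝ, 0 < C ∧ ∀ᶠ n in atTop, |x n - y n * (1 + ε n)| ≤ C * (q n)^2 * ω n := by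
  obtain ⟨C, hC⟩ := hO
  set C₁ : ℝ := max C 1 with hC₁def
  have hC₁pos : (0:ℝ) < C₁ := lt_of_lt_of_le one_pos (le_max_right _ _)
  have hC' : ∀ᶠ n in atTop, |Real.sqrt (x n) - Real.sqrt (y n)| ≤ C₁ * q n := by
    filter_upwards [hC] with n h
    exact h.trans (mul_le_mul_of_nonneg_right (le_max_left _ _) (hq n).le)
  set ε : ℕ → ℝ := fun n =>
    if Real.sqrt (y n) ≤ C₁ * q n * Real.sqrt (ω n) then 0 else (x n - y n) / y n with hεdef
  have hsq : ∀ n, Real.sqrt (x n) ^ 2 = x n := fun n => Real.sq_sqrt (hx n).le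
  have hsqy : ∀ n, Real.sqrt (y n) ^ 2 = y n := fun n => Real.sq_sqrt (hy n).le
  have hsqω : ∀ n, Real.sqrt (ω n) ^ 2 = ω n := fun n => Real.sq_sqrt (hω n).le
  have hsx : ∀ n, 0 < Real.sqrt (x n) := fun n => Real.sqrt_pos.mpr (hx n)
  have hsy : ∀ n, 0 < Real.sqrt (y n) := fun n => Real.sqrt_pos.mpr (hy n)
  have hsω : ∀ n, 0 < Real.sqrt (ω n) := fun n => Real.sqrt_pos.mpr (hω n)
  refine ⟨ε, ?_, 3 * C₁^2, by positivity, ?_⟩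
  · -- ε → 0 via squeeze
    have hsqrtTop : Tendsto (fun n => Real.sqrt (ω n)) atTop atTop := by
      rw [tendsto_atTop_atTop]
      intro b
      obtain ⟨N, hN⟩ := tendsto_atTop_atTop.mp hωinf (b ^ 2)
      refine ⟨N, fun n hn => ?_⟩
      have h1 : b ≤ Real.sqrt (b ^ 2) := by
        rw [Real.sqrt_sq_eq_abs]; exact le_abs_self b
      exact h1.trans (Real.sqrt_le_sqrt (hN n hn))
    have hf : Tendsto (fun n => 2 / Real.sqrt (ω n) + 1 / ω n) atTop (nhds 0) := by
      have h2 : Tendsto (fun n => 2 / Real.sqrt (ω n)) atTop (nhds 0) :=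
        tendsto_const_nhds.div_atTop hsqrtTop
      have h3 : Tendsto (fun n => 1 / ω n) atTop (nhds 0) :=
        tendsto_const_nhds.div_atTop hωinf
      simpa using h2.add h3
    apply squeeze_zero_norm' _ hf
    filter_upwards [hC'] with n h
    by_cases hb : Real.sqrt (y n) ≤ C₁ * q n * Real.sqrt (ω n)
    · simp only [hεdef, if_pos hb, norm_zero]
      exact add_nonneg (div_nonneg two_pos.le (Real.sqrt_nonneg _))
        (div_nonneg one_pos.le (hω n).le)
    · simp only [hεdef, if_neg hb]
      push_neg at hb
      rw [Real.norm_eq_abs, abs_div, abs_of_pos (hy n), div_le_iff₀ (hy n)]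
      have habs := abs_le.mp h
      have key : |x n - y n| ≤ C₁ * q n * (2 * Real.sqrt (y n) + C₁ * q n) := by
        have hxy : x n - y n = (Real.sqrt (x n) - Real.sqrt (y n)) *
            (Real.sqrt (x n) + Real.sqrt (y n)) := by
          have := hsq n; have := hsqy n; nlinarith
        rw [hxy, abs_mul, abs_of_pos (by nlinarith [hsx n, hsy n] :
            (0:ℝ) < Real.sqrt (x n) + Real.sqrt (y n))]
        have hax : Real.sqrt (x n) ≤ Real.sqrt (y n) + C₁ * q n := by linarith [habs.2]
        nlinarith [abs_nonneg (Real.sqrt (x n) - Real.sqrt (y n)), hsy n]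
      have hqlt : C₁ * q n < Real.sqrt (y n) / Real.sqrt (ω n) := by
        rw [lt_div_iff₀ (hsω n)]; linarith
      have hs0 : Real.sqrt (ω n) ≠ 0 := (hsω n).ne'
      have hω0 : ω n ≠ 0 := (hω n).ne'
      calc |x n - y n| ≤ C₁ * q n * (2 * Real.sqrt (y n) + C₁ * q n) := key
        _ ≤ (Real.sqrt (y n) / Real.sqrt (ω n)) *
            (2 * Real.sqrt (y n) + Real.sqrt (y n) / Real.sqrt (ω n)) := by
            have hp1 : (0:ℝ) ≤ C₁ * q n := by nlinarith [hq n]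
            have hp2 : (0:ℝ) ≤ 2 * Real.sqrt (y n) + C₁ * q n := by nlinarith [hsy n]
            apply mul_le_mul hqlt.le (by linarith) hp2
            exact div_nonneg (hsy n).le (hsω n).le
        _ = (2 / Real.sqrt (ω n) + 1 / ω n) * y n := by
            rw [← hsqy n, ← hsqω n]
            field_simp
            simp only [Real.sqrt_sq (hsy n).le, Real.sqrt_sq (hsω n).le]
            ring
  · -- main estimate
    filter_upwards [hC', hωinf.eventually_ge_atTop 1] with n h hω1
    by_cases hb : Real.sqrt (y n) ≤ C₁ * q n * Real.sqrt (ω n)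
    · simp only [hεdef, if_pos hb, add_zero, mul_one]
      have habs := abs_le.mp h
      have hxy : x n - y n = (Real.sqrt (x n) - Real.sqrt (y n)) *
          (Real.sqrt (x n) + Real.sqrt (y n)) := by
        have := hsq n; have := hsqy n; nlinarith
      have key : |x n - y n| ≤ C₁ * q n * (2 * Real.sqrt (y n) + C₁ * q n) := by
        rw [hxy, abs_mul, abs_of_pos (by nlinarith [hsx n, hsy n] :
            (0:ℝ) < Real.sqrt (x n) + Real.sqrt (y n))]
        have hax : Real.sqrt (x n) ≤ Real.sqrt (y n) + C₁ * q n := by linarith [habs.2]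
        nlinarith [abs_nonneg (Real.sqrt (x n) - Real.sqrt (y n)), hsy n]
      have hsle : Real.sqrt (ω n) ≤ ω n := by
        nlinarith [hsqω n, hsω n, hω1, (Real.sqrt_le_sqrt hω1 : Real.sqrt 1 ≤ Real.sqrt (ω n)), Real.sqrt_one]
      have hs1 : (1:ℝ) ≤ Real.sqrt (ω n) := by
        have := Real.sqrt_le_sqrt hω1
        simpa [Real.sqrt_one] using this
      have hp1 : (0:ℝ) ≤ C₁ * q n := by nlinarith [hq n]
      calc |x n - y n| ≤ C₁ * q n * (2 * Real.sqrt (y n) + C₁ * q n) := key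
        _ ≤ C₁ * q n * (2 * (C₁ * q n * Real.sqrt (ω n)) + C₁ * q n) :=
            mul_le_mul_of_nonneg_left (by linarith) hp1
        _ ≤ 3 * C₁^2 * q n ^ 2 * ω n := by
            have h1 : (C₁ * q n)^2 * Real.sqrt (ω n) ≤ (C₁ * q n)^2 * ω n :=
              mul_le_mul_of_nonneg_left hsle (sq_nonneg _)
            have h2 : (C₁ * q n)^2 * 1 ≤ (C₁ * q n)^2 * ω n :=
              mul_le_mul_of_nonneg_left hω1 (sq_nonneg _)
            nlinarith [h1, h2]
    · simp only [hεdef, if_neg hb]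
      have hy0 : y n ≠ 0 := (hy n).ne'
      have hz : x n - y n * (1 + (x n - y n) / y n) = 0 := by
        field_simp
        ring
      rw [hz, abs_zero]
      have : (0:ℝ) < 3 * C₁^2 * q n ^ 2 * ω n := by
        have := hq n; have := hω n; positivity
      linarith
end

section
/- Let $A_1, A_2, B$ be positive semidefinite real symmetric $n \times n$ matrices with $B \le A_1^{-1}$ in the Loewner order (where $A_1$ is positive definite). Then $\mathrm{tr}((B^{1/2}(A_1 - A_2)B^{1/2})^2) \le \mathrm{tr}((I_n - A_2^{1/2} A_1^{-1} A_2^{1/2})^2)$. -/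
open Matrix

section

open scoped ComplexOrder

/-- The old Mathlib `Matrix.PosSemidef.sqrt` (removed since), with its original definition. -/
noncomputable def Matrix.PosSemidef.sqrt {n 𝕜 : Type*} [Fintype n] [RCLike 𝕜] [DecidableEq n]
    {A : Matrix n n 𝕜} (hA : A.PosSemidef) : Matrix n n 𝕜 :=
  hA.1.eigenvectorUnitary.1 * diagonal ((↑) ∘ (√·) ∘ hA.1.eigenvalues) *
  (star hA.1.eigenvectorUnitary : Matrix n n 𝕜)

end

private lemma Matrix.PosSemidef.posSemidef_sqrt {n : ℕ} {A : Matrix (Fin n) (Fin n) ℝ}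
    (hA : A.PosSemidef) : hA.sqrt.PosSemidef := by
  have h := (posSemidef_diagonal_iff.mpr (fun i => Real.sqrt_nonneg _) :
    (diagonal ((↑) ∘ (√·) ∘ hA.1.eigenvalues) : Matrix (Fin n) (Fin n) ℝ).PosSemidef).mul_mul_conjTranspose_same
    (hA.1.eigenvectorUnitary : Matrix (Fin n) (Fin n) ℝ)
  unfold Matrix.PosSemidef.sqrt
  simp [Matrix.star_eq_conjTranspose] at h ⊢
  exact h

private lemma Matrix.PosSemidef.sqrt_mul_self {n : ℕ} {A : Matrix (Fin n) (Fin n) ℝ}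
    (hA : A.PosSemidef) : hA.sqrt * hA.sqrt = A := by
  set U : Matrix (Fin n) (Fin n) ℝ := hA.1.eigenvectorUnitary.1 with hU
  have hUU : star U * U = 1 := by simp [U]
  have hD : (diagonal ((↑) ∘ (√·) ∘ hA.1.eigenvalues) : Matrix (Fin n) (Fin n) ℝ) *
      diagonal ((↑) ∘ (√·) ∘ hA.1.eigenvalues) = diagonal ((↑) ∘ hA.1.eigenvalues) := by
    rw [diagonal_mul_diagonal]
    congr 1
    funext v
    simp [Real.mul_self_sqrt (hA.eigenvalues_nonneg v)]
  have hs := hA.1.spectral_theorem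
  rw [Unitary.conjStarAlgAut_apply] at hs
  unfold Matrix.PosSemidef.sqrt
  calc _ = U * (diagonal ((↑) ∘ (√·) ∘ hA.1.eigenvalues) * (star U * U) *
      diagonal ((↑) ∘ (√·) ∘ hA.1.eigenvalues)) * star U := by
        simp only [U, Matrix.mul_assoc]; rfl
    _ = A := by
        rw [hUU, Matrix.mul_one, hD]; exact hs.symm

private lemma trace_nonneg_of_psd {n : ℕ} {P : Matrix (Fin n) (Fin n) ℝ}
    (hP : P.PosSemidef) : 0 ≤ P.trace := by
  rw [Matrix.trace]
  refine Finset.sum_nonneg fun i _ => ?_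
  exact hP.diag_nonneg

private lemma trace_mul_nonneg_of_psd {n : ℕ} {P Q : Matrix (Fin n) (Fin n) ℝ}
    (hP : P.PosSemidef) (hQ : Q.PosSemidef) : 0 ≤ (P * Q).trace := by
  have hs := hQ.posSemidef_sqrt
  have h1 : (P * Q).trace = (hQ.sqrt * P * hQ.sqrt).trace := by
    calc (P * Q).trace = (P * (hQ.sqrt * hQ.sqrt)).trace := by rw [hQ.sqrt_mul_self]
    _ = (hQ.sqrt * (P * hQ.sqrt)).trace := by
        rw [← Matrix.mul_assoc, trace_mul_comm]
    _ = (hQ.sqrt * P * hQ.sqrt).trace := by rw [Matrix.mul_assoc]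
  rw [h1]
  refine trace_nonneg_of_psd ?_
  have := hP.mul_mul_conjTranspose_same hQ.sqrt
  rwa [hs.1.eq] at this

private lemma trace_mul_le_trace {n : ℕ} {P Q : Matrix (Fin n) (Fin n) ℝ}
    (hP : P.PosSemidef) (hQ : (1 - Q).PosSemidef) : (P * Q).trace ≤ P.trace := by
  have h := trace_mul_nonneg_of_psd hP hQ
  rw [Matrix.mul_sub, Matrix.mul_one, trace_sub] at h
  linarith

private lemma trace_one_sub_sq {n : ℕ} (P : Matrix (Fin n) (Fin n) ℝ) :
    ((1 - P) ^ 2).trace = (1 : Matrix (Fin n) (Fin n) ℝ).trace - 2 * P.trace + (P * P).trace := by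
  have h : (1 - P) ^ 2 = 1 - P - P + P * P := by noncomm_ring
  rw [h, trace_add, trace_sub, trace_sub]
  ring

set_option maxHeartbeats 1600000 in
/-- Second part of the trace approximation lemma: if `B ≤ A₁⁻¹` in the Loewner
order, then `tr((B^{1/2}(A₁-A₂)B^{1/2})²) ≤ tr((I - A₂^{1/2} A₁⁻¹ A₂^{1/2})²)`. -/
theorem trace_trick_loewner
    (n : ℕ) (A₁ A₂ B : Matrix (Fin n) (Fin n) ℝ)
    (hA₁ : A₁.PosDef) (hA₂ : A₂.PosSemidef) (hB : B.PosSemidef)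
    (hBA₁ : (A₁⁻¹ - B).PosSemidef) :
    ((hB.sqrt * (A₁ - A₂) * hB.sqrt) ^ 2).trace ≤
      ((1 - hA₂.sqrt * A₁⁻¹ * hA₂.sqrt) ^ 2).trace := by
  set C : Matrix (Fin n) (Fin n) ℝ := A₁ - A₂ with hC
  set R : Matrix (Fin n) (Fin n) ℝ := hA₁.posSemidef.sqrt with hRdef
  have hRpsd : R.PosSemidef := hA₁.posSemidef.posSemidef_sqrt
  have hRH : Rᴴ = R := hRpsd.1.eq
  have hRR : R * R = A₁ := hA₁.posSemidef.sqrt_mul_self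
  have hA₁det : IsUnit A₁.det := isUnit_iff_ne_zero.mpr hA₁.det_pos.ne'
  have hRdet : IsUnit R.det := by
    have h : R.det * R.det = A₁.det := by rw [← det_mul, hRR]
    exact isUnit_of_mul_isUnit_left (h ▸ hA₁det)
  have hRinv2 : R⁻¹ * R⁻¹ = A₁⁻¹ := by rw [← Matrix.mul_inv_rev, hRR]
  have hRiR : R⁻¹ * R = 1 := Matrix.nonsing_inv_mul _ hRdet
  have hRRi : R * R⁻¹ = 1 := Matrix.mul_nonsing_inv _ hRdet
  have hRA₁R : R * A₁⁻¹ * R = 1 := by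
    rw [← hRinv2, ← Matrix.mul_assoc R R⁻¹ R⁻¹, hRRi, Matrix.one_mul, hRiR]
  set M : Matrix (Fin n) (Fin n) ℝ := R⁻¹ * C * R⁻¹ with hMdef
  set E : Matrix (Fin n) (Fin n) ℝ := R * B * R with hEdef
  have hCH : Cᴴ = C := (hA₁.1.sub hA₂.1).eq
  have hRiH : (R⁻¹)ᴴ = R⁻¹ := by rw [Matrix.conjTranspose_nonsing_inv, hRH]
  have hMH : Mᴴ = M := by
    rw [hMdef, Matrix.conjTranspose_mul, Matrix.conjTranspose_mul, hRiH, hCH,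
      Matrix.mul_assoc, ← Matrix.mul_assoc]
  have hE : E.PosSemidef := by
    have h := hB.mul_mul_conjTranspose_same R
    rwa [hRH] at h
  have hIE : (1 - E).PosSemidef := by
    have h := hBA₁.mul_mul_conjTranspose_same R
    rwa [hRH, Matrix.mul_sub, Matrix.sub_mul, hRA₁R] at h
  have hMEM : (M * E * M).PosSemidef := by
    have h := hE.mul_mul_conjTranspose_same M
    rwa [hMH] at h
  have hMM : (M * M).PosSemidef := by
    have h := Matrix.posSemidef_conjTranspose_mul_self M
    rwa [hMH] at h
  -- cancellation helpers
  have cRiR : ∀ X : Matrix (Fin n) (Fin n) ℝ, R⁻¹ * (R * X) = X :=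
    fun X => Matrix.nonsing_inv_mul_cancel_left _ _ hRdet
  have cRRi : ∀ X : Matrix (Fin n) (Fin n) ℝ, R * (R⁻¹ * X) = X :=
    fun X => Matrix.mul_nonsing_inv_cancel_left _ _ hRdet
  have hs : hB.sqrt * hB.sqrt = B := hB.sqrt_mul_self
  have css : ∀ X : Matrix (Fin n) (Fin n) ℝ, hB.sqrt * (hB.sqrt * X) = B * X :=
    fun X => by rw [← Matrix.mul_assoc, hs]
  -- LHS equality: tr((s C s)^2) = tr((M E M) E)
  have lhs_eq : ((hB.sqrt * C * hB.sqrt) ^ 2).trace = ((M * E * M) * E).trace := by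
    have h1 : ((hB.sqrt * C * hB.sqrt) ^ 2).trace = (C * (B * (C * B))).trace := by
      have e : (hB.sqrt * C * hB.sqrt) * (hB.sqrt * C * hB.sqrt)
          = hB.sqrt * (C * (B * (C * hB.sqrt))) := by
        simp only [Matrix.mul_assoc, css]
      rw [pow_two, e, trace_mul_comm]
      simp only [Matrix.mul_assoc, hs]
    have h2 : ((M * E * M) * E).trace = (C * (B * (C * B))).trace := by
      have h3 : (M * E * M) * E = R⁻¹ * (C * (B * (C * (B * R)))) := by
        rw [hMdef, hEdef]
        simp only [Matrix.mul_assoc, cRiR, cRRi]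
      rw [h3, trace_mul_comm]
      simp only [Matrix.mul_assoc, hRRi, Matrix.mul_one]
    rw [h1, h2]
  -- tr(M M) equality
  have mm_eq : (M * M).trace = ((1 - A₂ * A₁⁻¹) ^ 2).trace := by
    have h1 : M * M = R⁻¹ * (C * (A₁⁻¹ * (C * R⁻¹))) := by
      rw [hMdef]
      simp only [Matrix.mul_assoc]
      rw [← Matrix.mul_assoc R⁻¹ R⁻¹, hRinv2]
    have h2 : (M * M).trace = (C * (A₁⁻¹ * (C * A₁⁻¹))).trace := by
      rw [h1, trace_mul_comm]
      simp only [Matrix.mul_assoc]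
      rw [hRinv2]
    have hCA : C * A₁⁻¹ = 1 - A₂ * A₁⁻¹ := by
      rw [hC, Matrix.sub_mul, Matrix.mul_nonsing_inv _ hA₁det]
    have h3 : C * (A₁⁻¹ * (C * A₁⁻¹)) = (1 - A₂ * A₁⁻¹) ^ 2 := by
      rw [pow_two, ← hCA, Matrix.mul_assoc]
    rw [h2, h3]
  -- RHS equality
  set T : Matrix (Fin n) (Fin n) ℝ := hA₂.sqrt with hTdef
  have hTT : T * T = A₂ := hA₂.sqrt_mul_self
  have cTT : ∀ X : Matrix (Fin n) (Fin n) ℝ, T * (T * X) = A₂ * X :=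
    fun X => by rw [← Matrix.mul_assoc, hTT]
  have rhs_eq : ((1 - T * A₁⁻¹ * T) ^ 2).trace = ((1 - A₂ * A₁⁻¹) ^ 2).trace := by
    rw [trace_one_sub_sq, trace_one_sub_sq]
    have e1 : (T * A₁⁻¹ * T).trace = (A₂ * A₁⁻¹).trace := by
      rw [trace_mul_cycle, hTT]
    have e2 : ((T * A₁⁻¹ * T) * (T * A₁⁻¹ * T)).trace = ((A₂ * A₁⁻¹) * (A₂ * A₁⁻¹)).trace := by
      have h1 : (T * A₁⁻¹ * T) * (T * A₁⁻¹ * T) = T * (A₁⁻¹ * (A₂ * (A₁⁻¹ * T))) := by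
        simp only [Matrix.mul_assoc, cTT]
      rw [h1, trace_mul_comm]
      have h2 : A₁⁻¹ * (A₂ * (A₁⁻¹ * T)) * T = A₁⁻¹ * (A₂ * (A₁⁻¹ * A₂)) := by
        simp only [Matrix.mul_assoc, hTT]
      rw [h2, trace_mul_comm]
      simp only [Matrix.mul_assoc]
    rw [e1, e2]
  -- main chain
  have step1 : ((M * E * M) * E).trace ≤ (M * E * M).trace := trace_mul_le_trace hMEM hIE
  have step2 : (M * E * M).trace = ((M * M) * E).trace := by
    rw [trace_mul_cycle, ← Matrix.mul_assoc]
  have step3 : ((M * M) * E).trace ≤ (M * M).trace := trace_mul_le_trace hMM hIE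
  rw [lhs_eq, rhs_eq, ← mm_eq]
  linarith [step1, step2, step3]
end
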